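/- Let A ∈ ℂ ∖ [−1, ∞), ζ± = (1 ± √(A+1))², r = ζ₊ − ζ₋ = 4√(A+1), and parametrize the segment [ζ₋, ζ₊] by t(s) = r s + ζ₋, s ∈ [0,1]. Then the function ℓ(s) = Im(r)·s + Im( (r²/|r|²)·conj(ζ₋) ) is a nonconstant affine function of s; consequently ℓ changes sign at most once on [0,1]. -/
import Mathlib


open Filter

/-- Principal square root on `ℂ`. -/
noncomputable def sqrtc (z : ℂ) : ℂ := z ^ ((1 : ℂ) / 2)

/-- The root `ζ₊(A) = (1 + √(A+1))²` of `D_A(z) = (z−A)² − 4z`. -/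
noncomputable def zetaP (A : ℂ) : ℂ := (1 + sqrtc (A + 1)) ^ 2

/-- The root `ζ₋(A) = (1 − √(A+1))²` of `D_A(z) = (z−A)² − 4z`. -/
noncomputable def zetaM (A : ℂ) : ℂ := (1 - sqrtc (A + 1)) ^ 2

/-- The affine function `ℓ(s) = Im(r)·s + Im((r²/|r|²)·conj(ζ₋))`, where
`r = ζ₊ − ζ₋ = 4√(A+1)`, arising from the parametrization `t(s) = r s + ζ₋` of the
segment `[ζ₋, ζ₊]`. -/
noncomputable def ellFun (A : ℂ) (s : ℝ) : ℝ :=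
  (4 * sqrtc (A + 1)).im * s +
    (((4 * sqrtc (A + 1)) ^ 2 / ((Complex.normSq (4 * sqrtc (A + 1)) : ℝ) : ℂ)) *
      (starRingEnd ℂ) (zetaM A)).im

lemma sqrtc_sq (z : ℂ) : (sqrtc z) ^ 2 = z := by
  have h := Complex.cpow_nat_inv_pow z (n := 2) two_ne_zero
  simpa [sqrtc, one_div, show (((2 : ℕ) : ℂ)) = 2 by norm_num] using h

lemma sqrtc_im_ne (A : ℂ) (hA : ¬(A.im = 0 ∧ -1 ≤ A.re)) : (sqrtc (A + 1)).im ≠ 0 := by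
  intro h
  have hsq := sqrtc_sq (A + 1)
  set w := sqrtc (A + 1)
  apply hA
  constructor
  · have : (A + 1).im = (w ^ 2).im := by rw [hsq]
    simp [Complex.add_im, pow_two, Complex.mul_im, h] at this
    simpa using this
  · have : (A + 1).re = (w ^ 2).re := by rw [hsq]
    simp [Complex.add_re, pow_two, Complex.mul_re, h] at this
    nlinarith [sq_nonneg w.re]

/-- For `A ∈ ℂ ∖ [−1,∞)`, `ℓ` is a nonconstant affine function of `s`, and consequently
it changes sign at most once on `[0,1]`. -/
theorem ell_nonconstant_sign_change (A : ℂ) (hA : ¬(A.im = 0 ∧ -1 ≤ A.re)) :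
    (¬((4 * sqrtc (A + 1)).im = 0 ∧
        (((4 * sqrtc (A + 1)) ^ 2 / ((Complex.normSq (4 * sqrtc (A + 1)) : ℝ) : ℂ)) *
          (starRingEnd ℂ) (zetaM A)).im = 0)) ∧
    ¬ ∃ s₁ s₂ s₃ : ℝ, s₁ ∈ Set.Icc (0 : ℝ) 1 ∧ s₂ ∈ Set.Icc (0 : ℝ) 1 ∧
        s₃ ∈ Set.Icc (0 : ℝ) 1 ∧ s₁ < s₂ ∧ s₂ < s₃ ∧
        ellFun A s₁ * ellFun A s₂ < 0 ∧ ellFun A s₂ * ellFun A s₃ < 0 := by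
  constructor
  · rintro ⟨h1, -⟩
    have := sqrtc_im_ne A hA
    simp [Complex.mul_im] at h1
    exact this (by linarith)
  · rintro ⟨s₁, s₂, s₃, -, -, -, h12, h23, hp1, hp2⟩
    set a := (4 * sqrtc (A + 1)).im
    set b := (((4 * sqrtc (A + 1)) ^ 2 / ((Complex.normSq (4 * sqrtc (A + 1)) : ℝ) : ℂ)) *
      (starRingEnd ℂ) (zetaM A)).im
    have e1 : ellFun A s₁ = a * s₁ + b := rfl
    have e2 : ellFun A s₂ = a * s₂ + b := rfl
    have e3 : ellFun A s₃ = a * s₃ + b := rfl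
    rw [e1, e2] at hp1
    rw [e2, e3] at hp2
    have key : (a * s₂ + b - (a * s₁ + b)) * (s₃ - s₂)
        = (a * s₃ + b - (a * s₂ + b)) * (s₂ - s₁) := by ring
    rcases lt_trichotomy (a * s₂ + b) 0 with hv | hv | hv
    · have hu : 0 < a * s₁ + b := by nlinarith
      have hw : 0 < a * s₃ + b := by nlinarith
      nlinarith [mul_pos (sub_pos.2 h12) (sub_pos.2 h23)]
    · rw [hv, mul_zero] at hp1; linarith
    · have hu : a * s₁ + b < 0 := by nlinarith
      have hw : a * s₃ + b < 0 := by nlinarith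
      nlinarith [mul_pos (sub_pos.2 h12) (sub_pos.2 h23)]
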